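/- Let n ≥ 2 and let a ∈ ℂ^{2^n} be a unit vector, i.e., Σ_{i=0}^{2^n−1} |a_i|² = 1. Then the quadratic form c₂ = Σ_{j,k=0}^{2^n−1} conj(a_j)·M_{jk}·a_k is a real number and satisfies η_min(n) ≤ c₂ ≤ η_max(n). -/

import Mathlib

/-- Hamming weight: number of 1's in the `n`-bit binary representation of `i`. -/
def hamW (n i : ℕ) : ℕ := ((Finset.range n).filter (fun p => i.testBit p)).card

/-- Hamming distance between the `n`-bit binary representations of `i` and `j`. -/
def hamD (n i j : ℕ) : ℕ :=
  ((Finset.range n).filter (fun p => i.testBit p ≠ j.testBit p)).card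

/-- The matrix `M`. -/
noncomputable def Mmat (n : ℕ) : Matrix (Fin (2 ^ n)) (Fin (2 ^ n)) ℝ := fun i j =>
  if i = j then
    ((n : ℝ) - 1) * (1 - 1 / Real.sqrt 2) +
      (1 / n) * ((n : ℝ) - (2 * (hamW n i : ℝ) - (n : ℝ)) ^ 2) * (1 - 1 / Real.sqrt 2) ^ 2
  else
    (2 / n) * (1 - 1 / Real.sqrt 2) ^ 2 *
      ((if hamD n i j = 1 then (n : ℝ) - 1 - 2 * (min (hamW n i) (hamW n j) : ℝ) else 0)
        - (if hamD n i j = 2 then 1 else 0))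

/-- `η_max(n)`. -/
noncomputable def etaMax (n : ℕ) : ℝ :=
  if Even n then
    (1 - 1 / Real.sqrt 2) ^ 2 * (((n : ℝ) - 1) * Real.sqrt 2 + 2 * (n : ℝ))
  else
    (1 - 1 / Real.sqrt 2) ^ 2 * (((n : ℝ) - 1) * Real.sqrt 2 + 2 * (n : ℝ) - 2 / (n : ℝ))

/-- `η_min(n)`. -/
noncomputable def etaMin (n : ℕ) : ℝ :=
  (1 - 1 / Real.sqrt 2) ^ 2 * Real.sqrt 2 * ((n : ℝ) - 1)


open Finset




/- scalar constants -/
noncomputable def zp : ℝ := Real.sqrt (2 - Real.sqrt 2) / 2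
noncomputable def zq : ℝ := Real.sqrt (2 + Real.sqrt 2) / 2
noncomputable def zw (b c : Bool) : ℝ := if b = c then (if b then -zp else zp) else zq

lemma s2_pos : (0:ℝ) < Real.sqrt 2 := Real.sqrt_pos.mpr (by norm_num)
lemma s2_sq : Real.sqrt 2 ^ 2 = 2 := Real.sq_sqrt (by norm_num)
lemma s2_lt : Real.sqrt 2 < 2 := by nlinarith [s2_sq, s2_pos]

lemma zp_sq : zp ^ 2 = (2 - Real.sqrt 2) / 4 := by
  have h : (0:ℝ) ≤ 2 - Real.sqrt 2 := by nlinarith [s2_lt]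
  rw [zp, div_pow, Real.sq_sqrt h]; norm_num

lemma zq_sq : zq ^ 2 = (2 + Real.sqrt 2) / 4 := by
  have h : (0:ℝ) ≤ 2 + Real.sqrt 2 := by nlinarith [s2_pos]
  rw [zq, div_pow, Real.sq_sqrt h]; norm_num

lemma zp_nonneg : 0 ≤ zp := by rw [zp]; positivity
lemma zq_nonneg : 0 ≤ zq := by rw [zq]; positivity

lemma zq_eq : zq = (1 + Real.sqrt 2) * zp := by
  have h1 : zq ^ 2 = ((1 + Real.sqrt 2) * zp) ^ 2 := by
    rw [zq_sq, mul_pow, zp_sq]; nlinarith [s2_sq]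
  have h2 : 0 ≤ (1 + Real.sqrt 2) * zp := mul_nonneg (by nlinarith [s2_pos]) zp_nonneg
  nlinarith [zq_nonneg, h2, h1]

lemma zpq_sq : zp ^ 2 + zq ^ 2 = 1 := by rw [zp_sq, zq_sq]; ring

lemma zw_symm (b c : Bool) : zw b c = zw c b := by
  cases b <;> cases c <;> simp [zw]

lemma zw_ortho (c c' : Bool) :
    zw false c * zw false c' + zw true c * zw true c' = if c = c' then 1 else 0 := by
  cases c <;> cases c' <;> simp [zw] <;> nlinarith [zpq_sq]

lemma zw_eig (b c : Bool) :
    zw (!b) c - (1 - 2 * (if b then (1:ℝ) else 0)) * zw b c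
      = Real.sqrt 2 * (if c then -1 else 1) * zw b c := by
  have h1 : zq - zp = Real.sqrt 2 * zp := by rw [zq_eq]; ring
  have h2 : zp + zq = Real.sqrt 2 * zq := by
    rw [zq_eq]; linear_combination (-zp) * s2_sq
  cases b <;> cases c <;> simp [zw] <;> nlinarith [h1, h2]





lemma testBit_high {x n p : ℕ} (hx : x < 2 ^ n) (hp : n ≤ p) : x.testBit p = false :=
  Nat.testBit_eq_false_of_lt (hx.trans_le (Nat.pow_le_pow_right (by norm_num) hp))

lemma eq_of_low_bits {x y n : ℕ} (hx : x < 2 ^ n) (hy : y < 2 ^ n)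
    (h : ∀ p, p < n → x.testBit p = y.testBit p) : x = y := by
  apply Nat.eq_of_testBit_eq
  intro p
  by_cases hp : p < n
  · exact h p hp
  · rw [testBit_high hx (le_of_not_gt hp), testBit_high hy (le_of_not_gt hp)]

lemma hamW_cast (n i : ℕ) :
    (hamW n i : ℝ) = ∑ p ∈ range n, (if i.testBit p then 1 else 0) := by
  rw [hamW, card_filter]
  push_cast
  rfl

lemma hamW_le (n i : ℕ) : hamW n i ≤ n := by
  simpa [hamW] using card_filter_le (range n) (fun p => i.testBit p)

lemma hamD_self (n j : ℕ) : hamD n j j = 0 := by simp [hamD]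

lemma hamD_comm (n j k : ℕ) : hamD n j k = hamD n k j := by
  unfold hamD
  congr 1
  apply filter_congr
  intro p _
  simp [ne_comm]

lemma hamD_xor_filter (n j k : ℕ) :
    (range n).filter (fun q => (j ^^^ k).testBit q) =
      (range n).filter (fun q => j.testBit q ≠ k.testBit q) := by
  apply filter_congr
  intro p _
  simp [Nat.testBit_xor]

lemma hamD_eq (n j k : ℕ) : hamD n j k = ((range n).filter (fun q => (j ^^^ k).testBit q)).card := by
  rw [hamD, hamD_xor_filter]

lemma filter_two_pow {n p : ℕ} (hp : p < n) :
    (range n).filter (fun q => (2 ^ p).testBit q) = {p} := by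
  ext q
  simp only [mem_filter, mem_range, mem_singleton, Nat.testBit_two_pow]
  constructor
  · rintro ⟨_, h⟩; exact (of_decide_eq_true h).symm
  · rintro rfl; exact ⟨hp, by simp⟩

lemma filter_two_two {n a b : ℕ} (ha : a < n) (hb : b < n) (hab : a ≠ b) :
    (range n).filter (fun q => (2 ^ a ^^^ 2 ^ b).testBit q) = {a, b} := by
  ext q
  simp only [mem_filter, mem_range, mem_insert, mem_singleton, Nat.testBit_xor,
    Nat.testBit_two_pow]
  constructor
  · rintro ⟨_, h⟩
    rcases eq_or_ne a q with rfl | h1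
    · exact Or.inl rfl
    rcases eq_or_ne b q with rfl | h2
    · exact Or.inr rfl
    · simp [h1, h2] at h
  · rintro (rfl | rfl)
    · simp [ha, Ne.symm hab]
    · simp [hb, hab]

lemma xor_flip_lt {n p j : ℕ} (hp : p < n) (hj : j < 2 ^ n) : j ^^^ 2 ^ p < 2 ^ n :=
  Nat.xor_lt_two_pow hj (Nat.pow_lt_pow_right (by norm_num) hp)

lemma xor_left_cancel {j a b : ℕ} (h : j ^^^ a = j ^^^ b) : a = b := by
  have := congrArg (fun x => j ^^^ x) h
  simpa [← Nat.xor_assoc] using this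

lemma xor_shift {j k u v : ℕ} : j ^^^ u = k ^^^ v ↔ j ^^^ k = u ^^^ v := by
  constructor <;> intro h <;> apply Nat.eq_of_testBit_eq <;> intro p <;>
    have h2 := congrArg (fun x => x.testBit p) h <;>
    simp only [Nat.testBit_xor] at h2 ⊢ <;>
    revert h2 <;>
    cases j.testBit p <;> cases k.testBit p <;> cases u.testBit p <;> cases v.testBit p <;>
      simp

lemma hamD_flip {n p : ℕ} (j : ℕ) (hp : p < n) : hamD n j (j ^^^ 2 ^ p) = 1 := by
  rw [hamD_eq]
  have h : j ^^^ (j ^^^ 2 ^ p) = 2 ^ p := by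
    simp [← Nat.xor_assoc]
  rw [h, filter_two_pow hp, card_singleton]

lemma hamD_one_iff {n j k : ℕ} (hj : j < 2 ^ n) (hk : k < 2 ^ n) :
    hamD n j k = 1 ↔ ∃ p, p < n ∧ k = j ^^^ 2 ^ p := by
  constructor
  · intro h
    rw [hamD_eq, card_eq_one] at h
    obtain ⟨p, hp⟩ := h
    have hpn : p < n := by
      have : p ∈ (range n).filter (fun q => (j ^^^ k).testBit q) := hp ▸ mem_singleton_self p
      exact mem_range.mp (mem_filter.mp this).1
    refine ⟨p, hpn, ?_⟩
    have hx : j ^^^ k = 2 ^ p := by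
      apply eq_of_low_bits (Nat.xor_lt_two_pow hj hk) (Nat.pow_lt_pow_right (by norm_num) hpn)
      intro q hq
      have h1 : (j ^^^ k).testBit q = true ↔ q = p := by
        constructor
        · intro ht
          have : q ∈ (range n).filter (fun q => (j ^^^ k).testBit q) :=
            mem_filter.mpr ⟨mem_range.mpr hq, ht⟩
          rw [hp] at this; exact mem_singleton.mp this
        · intro hqp
          have hm : p ∈ (range n).filter (fun r => (j ^^^ k).testBit r) := by
            rw [hp]; exact mem_singleton_self p
          rw [hqp]
          exact (mem_filter.mp hm).2
      rw [Nat.testBit_two_pow]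
      rcases eq_or_ne q p with rfl | hqp
      · simp [h1.mpr rfl]
      · have : (j ^^^ k).testBit q = false := by
          cases h : (j ^^^ k).testBit q
          · rfl
          · exact absurd (h1.mp h) hqp
        simp [this, Ne.symm hqp]
    have := congrArg (fun x => j ^^^ x) hx
    simpa [← Nat.xor_assoc] using this
  · rintro ⟨p, hpn, rfl⟩
    exact hamD_flip j hpn


noncomputable def zU (n j i : ℕ) : ℝ := ∏ p ∈ range n, zw (j.testBit p) (i.testBit p)
noncomputable def zD (n j k : ℕ) : ℝ :=
  (if hamD n j k = 1 then 1 else 0) - (if j = k then (n:ℝ) - 2 * hamW n j else 0)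

/-- sum over all bitstrings of a product over bits factorizes -/
lemma sumProd (n : ℕ) (f : ℕ → Bool → ℝ) :
    ∑ j ∈ range (2 ^ n), ∏ p ∈ range n, f p (j.testBit p)
      = ∏ p ∈ range n, (f p false + f p true) := by
  induction n generalizing f with
  | zero => simp
  | succ n ih =>
    have h2 : 2 ^ (n + 1) = 2 ^ n + 2 ^ n := by ring
    rw [h2, Finset.sum_range_add]
    have hA : ∀ j ∈ range (2 ^ n),
        ∏ p ∈ range (n + 1), f p (j.testBit p)
          = (∏ p ∈ range n, f p (j.testBit p)) * f n false := by
      intro j hj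
      rw [prod_range_succ, testBit_high (mem_range.mp hj) le_rfl]
    have hB : ∀ j ∈ range (2 ^ n),
        ∏ p ∈ range (n + 1), f p ((2 ^ n + j).testBit p)
          = (∏ p ∈ range n, f p (j.testBit p)) * f n true := by
      intro j hj
      rw [prod_range_succ, Nat.testBit_two_pow_add_eq,
        testBit_high (mem_range.mp hj) le_rfl]
      congr 1
      exact Finset.prod_congr rfl fun p hp => by
        rw [Nat.testBit_two_pow_add_gt (mem_range.mp hp)]
    rw [sum_congr rfl hA, sum_congr rfl hB, ← sum_mul, ← sum_mul, ih, prod_range_succ]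
    ring

lemma zU_symm (n j i : ℕ) : zU n j i = zU n i j :=
  Finset.prod_congr rfl fun p _ => zw_symm _ _

lemma zU_ortho {n i i' : ℕ} (hi : i < 2 ^ n) (hi' : i' < 2 ^ n) :
    ∑ j ∈ range (2 ^ n), zU n j i * zU n j i' = if i = i' then 1 else 0 := by
  have h1 : ∀ j, zU n j i * zU n j i'
      = ∏ p ∈ range n, (zw (j.testBit p) (i.testBit p) * zw (j.testBit p) (i'.testBit p)) := by
    intro j; rw [zU, zU, ← prod_mul_distrib]
  simp_rw [h1]
  rw [sumProd n (fun p b => zw b (i.testBit p) * zw b (i'.testBit p))]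
  have h2 : ∀ p, zw false (i.testBit p) * zw false (i'.testBit p)
      + zw true (i.testBit p) * zw true (i'.testBit p)
      = if i.testBit p = i'.testBit p then 1 else 0 := fun p => zw_ortho _ _
  rw [Finset.prod_congr rfl fun p _ => h2 p, Finset.prod_boole]
  by_cases h : i = i'
  · simp [h]
  · have : ¬ ∀ p ∈ range n, i.testBit p = i'.testBit p := by
      intro hall
      exact h (eq_of_low_bits hi hi' fun p hp => hall p (mem_range.mpr hp))
    rw [if_neg this, if_neg h]

lemma Xsplit {n j k : ℕ} (hj : j < 2 ^ n) (hk : k < 2 ^ n) :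
    (if hamD n j k = 1 then (1:ℝ) else 0)
      = ∑ p ∈ range n, (if k = j ^^^ 2 ^ p then 1 else 0) := by
  by_cases h : hamD n j k = 1
  · obtain ⟨p₀, hp₀, rfl⟩ := (hamD_one_iff hj hk).mp h
    rw [if_pos h]
    rw [Finset.sum_eq_single p₀]
    · simp
    · intro p hp hne
      rw [if_neg]
      intro heq
      exact hne (Nat.pow_right_injective (by norm_num) (xor_left_cancel heq.symm))
    · intro hab; exact absurd (mem_range.mpr hp₀) hab
  · rw [if_neg h]
    symm
    apply Finset.sum_eq_zero
    intro p hp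
    rw [if_neg]
    rintro rfl
    exact h (hamD_flip j (mem_range.mp hp))

lemma hamW_flip {n p j : ℕ} (hp : p < n) :
    (hamW n (j ^^^ 2 ^ p) : ℝ) = hamW n j + (if j.testBit p then -1 else 1) := by
  rw [hamW_cast, hamW_cast]
  have hmem : p ∈ range n := mem_range.mpr hp
  rw [← Finset.add_sum_erase _ _ hmem, ← Finset.add_sum_erase _ _ hmem]
  have h1 : ∀ q ∈ (range n).erase p,
      (if (j ^^^ 2 ^ p).testBit q then (1:ℝ) else 0) = (if j.testBit q then 1 else 0) := by
    intro q hq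
    have hqp : q ≠ p := (Finset.mem_erase.mp hq).1
    rw [Nat.testBit_xor, Nat.testBit_two_pow, decide_eq_false (Ne.symm hqp)]
    simp
  rw [Finset.sum_congr rfl h1]
  have h2 : (j ^^^ 2 ^ p).testBit p = !j.testBit p := by
    rw [Nat.testBit_xor, Nat.testBit_two_pow, decide_eq_true rfl]
    cases j.testBit p <;> simp
  rw [h2]
  cases j.testBit p <;> simp <;> ring

/-- The diagonal part split into bits. -/
lemma Dsplit {n j k : ℕ} (hj : j < 2 ^ n) (hk : k < 2 ^ n) :
    zD n j k = ∑ p ∈ range n,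
      ((if k = j ^^^ 2 ^ p then (1:ℝ) else 0)
        - (if j = k then 1 - 2 * (if j.testBit p then (1:ℝ) else 0) else 0)) := by
  rw [Finset.sum_sub_distrib, zD, ← Xsplit hj hk]
  congr 1
  by_cases h : j = k
  · subst h
    rw [if_pos rfl]
    have hcg : ∀ p ∈ range n,
        (if j = j then 1 - 2 * (if j.testBit p then (1:ℝ) else 0) else 0)
          = 1 - 2 * (if j.testBit p then (1:ℝ) else 0) := fun p _ => if_pos rfl
    rw [Finset.sum_congr rfl hcg, Finset.sum_sub_distrib, Finset.sum_const, card_range,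
      nsmul_eq_mul, mul_one, ← Finset.mul_sum, ← hamW_cast]
  · simp [h]

/-- Eigenvector lemma: column i of zU is an eigenvector of zD with eigenvalue √2 (n - 2W(i)). -/
lemma eig {n j : ℕ} (hj : j < 2 ^ n) (i : ℕ) :
    ∑ k ∈ range (2 ^ n), zD n j k * zU n k i
      = Real.sqrt 2 * ((n : ℝ) - 2 * hamW n i) * zU n j i := by
  have step1 : ∑ k ∈ range (2 ^ n), zD n j k * zU n k i
      = ∑ p ∈ range n, (zU n (j ^^^ 2 ^ p) i
          - (1 - 2 * (if j.testBit p then (1:ℝ) else 0)) * zU n j i) := by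
    have h1 : ∀ k ∈ range (2 ^ n), zD n j k * zU n k i
        = ∑ p ∈ range n, ((if k = j ^^^ 2 ^ p then (1:ℝ) else 0) * zU n k i
            - (if j = k then 1 - 2 * (if j.testBit p then (1:ℝ) else 0) else 0) * zU n k i) := by
      intro k hk
      rw [Dsplit hj (mem_range.mp hk), Finset.sum_mul]
      exact Finset.sum_congr rfl fun p _ => by ring
    rw [Finset.sum_congr rfl h1, Finset.sum_comm]
    apply Finset.sum_congr rfl
    intro p hp
    rw [Finset.sum_sub_distrib]
    congr 1
    · have hconv : ∀ k ∈ range (2 ^ n),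
          (if k = j ^^^ 2 ^ p then (1:ℝ) else 0) * zU n k i
            = if k = j ^^^ 2 ^ p then zU n k i else 0 := by
        intro k _; by_cases h : k = j ^^^ 2 ^ p <;> simp [h]
      rw [Finset.sum_congr rfl hconv,
        Finset.sum_ite_eq' (range (2 ^ n)) (j ^^^ 2 ^ p) (fun k => zU n k i),
        if_pos (mem_range.mpr (xor_flip_lt (mem_range.mp hp) hj))]
    · have : ∀ k ∈ range (2 ^ n),
          (if j = k then 1 - 2 * (if j.testBit p then (1:ℝ) else 0) else 0) * zU n k i
            = if k = j then (1 - 2 * (if j.testBit p then (1:ℝ) else 0)) * zU n k i else 0 := by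
        intro k _
        by_cases h : j = k
        · rw [if_pos h, if_pos h.symm]
        · rw [if_neg h, if_neg (fun hh => h hh.symm), zero_mul]
      rw [Finset.sum_congr rfl this, Finset.sum_ite_eq' (range (2 ^ n)) j
        (fun k => (1 - 2 * (if j.testBit p then (1:ℝ) else 0)) * zU n k i),
        if_pos (mem_range.mpr hj)]
  rw [step1]
  have step2 : ∀ p ∈ range n,
      zU n (j ^^^ 2 ^ p) i - (1 - 2 * (if j.testBit p then (1:ℝ) else 0)) * zU n j i
        = Real.sqrt 2 * (if i.testBit p then -1 else 1) * zU n j i := by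
    intro p hp
    have hmem : p ∈ range n := hp
    rw [zU, zU, ← Finset.mul_prod_erase _ _ hmem, ← Finset.mul_prod_erase _ _ hmem]
    have hbits : ∀ q ∈ (range n).erase p,
        zw ((j ^^^ 2 ^ p).testBit q) (i.testBit q) = zw (j.testBit q) (i.testBit q) := by
      intro q hq
      have hqp : q ≠ p := (Finset.mem_erase.mp hq).1
      rw [Nat.testBit_xor, Nat.testBit_two_pow, decide_eq_false (Ne.symm hqp)]
      simp
    rw [Finset.prod_congr rfl hbits]
    have hflip : (j ^^^ 2 ^ p).testBit p = !j.testBit p := by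
      rw [Nat.testBit_xor, Nat.testBit_two_pow, decide_eq_true rfl]
      cases j.testBit p <;> simp
    rw [hflip]
    have := zw_eig (j.testBit p) (i.testBit p)
    set R := ∏ q ∈ (range n).erase p, zw (j.testBit q) (i.testBit q)
    linear_combination R * this
  rw [Finset.sum_congr rfl step2]
  have step3 : ∑ p ∈ range n, Real.sqrt 2 * (if i.testBit p then (-1:ℝ) else 1) * zU n j i
      = Real.sqrt 2 * (∑ p ∈ range n, (if i.testBit p then (-1:ℝ) else 1)) * zU n j i := by
    rw [← Finset.sum_mul, ← Finset.mul_sum]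
  rw [step3]
  have hW : (∑ p ∈ range n, (if i.testBit p then (-1:ℝ) else 1)) = (n:ℝ) - 2 * hamW n i := by
    have hcg : ∀ p ∈ range n,
        (if i.testBit p then (-1:ℝ) else 1) = 1 - 2 * (if i.testBit p then (1:ℝ) else 0) := by
      intro p _; cases i.testBit p <;> norm_num
    rw [Finset.sum_congr rfl hcg, Finset.sum_sub_distrib, Finset.sum_const, card_range,
      nsmul_eq_mul, mul_one, ← Finset.mul_sum, ← hamW_cast]
  rw [hW]


noncomputable def Mr (n j k : ℕ) : ℝ :=
  if j = k then
    ((n : ℝ) - 1) * (1 - 1 / Real.sqrt 2) +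
      (1 / n) * ((n : ℝ) - (2 * (hamW n j : ℝ) - (n : ℝ)) ^ 2) * (1 - 1 / Real.sqrt 2) ^ 2
  else
    (2 / n) * (1 - 1 / Real.sqrt 2) ^ 2 *
      ((if hamD n j k = 1 then (n : ℝ) - 1 - 2 * (min (hamW n j) (hamW n k) : ℝ) else 0)
        - (if hamD n j k = 2 then 1 else 0))
noncomputable def zA (n : ℕ) : ℝ :=
  ((n : ℝ) - 1) * (1 - 1 / Real.sqrt 2) + 2 * (1 - 1 / Real.sqrt 2) ^ 2
noncomputable def zB (n : ℕ) : ℝ := (1 - 1 / Real.sqrt 2) ^ 2 / n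


lemma neighbor_count {n j : ℕ} (hj : j < 2 ^ n) :
    ∑ l ∈ range (2 ^ n), (if hamD n j l = 1 then (1:ℝ) else 0) = n := by
  have h1 : ∀ l ∈ range (2 ^ n), (if hamD n j l = 1 then (1:ℝ) else 0)
      = ∑ p ∈ range n, (if l = j ^^^ 2 ^ p then 1 else 0) := by
    intro l hl; exact Xsplit hj (mem_range.mp hl)
  rw [Finset.sum_congr rfl h1, Finset.sum_comm]
  have h2 : ∀ p ∈ range n,
      ∑ l ∈ range (2 ^ n), (if l = j ^^^ 2 ^ p then (1:ℝ) else 0) = 1 := by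
    intro p hp
    rw [Finset.sum_ite_eq' (range (2 ^ n)) (j ^^^ 2 ^ p) (fun _ => (1:ℝ)),
      if_pos (mem_range.mpr (xor_flip_lt (mem_range.mp hp) hj))]
  rw [Finset.sum_congr rfl h2, Finset.sum_const, card_range, nsmul_eq_mul, mul_one]

lemma pairsum {n j k : ℕ} (hj : j < 2 ^ n) (hk : k < 2 ^ n) (hjk : j ≠ k) :
    ∑ p ∈ range n, ∑ q ∈ range n, (if j ^^^ 2 ^ p = k ^^^ 2 ^ q then (1:ℝ) else 0)
      = if hamD n j k = 2 then 2 else 0 := by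
  have hx0 : j ^^^ k ≠ 0 := fun h => hjk (xor_left_cancel (h.trans (Nat.xor_self j).symm)).symm
  by_cases h2 : hamD n j k = 2
  · rw [if_pos h2]
    rw [hamD_eq] at h2
    obtain ⟨a, b, hab, hset⟩ := Finset.card_eq_two.mp h2
    have haR : a ∈ (range n).filter (fun q => (j ^^^ k).testBit q) := by
      rw [hset]; exact mem_insert_self a {b}
    have hbR : b ∈ (range n).filter (fun q => (j ^^^ k).testBit q) := by
      rw [hset]; exact mem_insert_of_mem (mem_singleton_self b)
    have han : a < n := mem_range.mp (mem_filter.mp haR).1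
    have hbn : b < n := mem_range.mp (mem_filter.mp hbR).1
    have hxab : j ^^^ k = 2 ^ a ^^^ 2 ^ b := by
      apply eq_of_low_bits (Nat.xor_lt_two_pow hj hk)
        (Nat.xor_lt_two_pow (Nat.pow_lt_pow_right (by norm_num) han)
          (Nat.pow_lt_pow_right (by norm_num) hbn))
      intro q hq
      have hmem : (j ^^^ k).testBit q = true ↔ q ∈ ({a, b} : Finset ℕ) := by
        rw [← hset]
        constructor
        · intro ht; exact mem_filter.mpr ⟨mem_range.mpr hq, ht⟩
        · intro ht; exact (mem_filter.mp ht).2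
      have hmem2 : (2 ^ a ^^^ 2 ^ b).testBit q = true ↔ q ∈ ({a, b} : Finset ℕ) := by
        rw [← filter_two_two han hbn hab]
        constructor
        · intro ht; exact mem_filter.mpr ⟨mem_range.mpr hq, ht⟩
        · intro ht; exact (mem_filter.mp ht).2
      cases hq1 : (j ^^^ k).testBit q
      · cases hq2 : (2 ^ a ^^^ 2 ^ b).testBit q
        · rfl
        · exact absurd (hmem.mpr (hmem2.mp hq2)) (by simp [hq1])
      · exact (hmem2.mpr (hmem.mp hq1)).symm
    -- condition equivalence
    have hcond : ∀ p q, p < n → q < n →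
        ((j ^^^ 2 ^ p = k ^^^ 2 ^ q) ↔ ((p = a ∧ q = b) ∨ (p = b ∧ q = a))) := by
      intro p q hpn hqn
      rw [xor_shift, hxab]
      constructor
      · intro h
        have hpq : p ≠ q := by
          rintro rfl
          rw [Nat.xor_self] at h
          exact hx0 (by rw [hxab, ← h])
        have hfs : ({p, q} : Finset ℕ) = {a, b} := by
          rw [← filter_two_two hpn hqn hpq, ← filter_two_two han hbn hab, h]
        have hp' : p ∈ ({a, b} : Finset ℕ) := by rw [← hfs]; exact mem_insert_self p {q}
        have hq' : q ∈ ({a, b} : Finset ℕ) := by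
          rw [← hfs]; exact mem_insert_of_mem (mem_singleton_self q)
        simp only [mem_insert, mem_singleton] at hp' hq'
        rcases hp' with rfl | rfl
        · rcases hq' with rfl | rfl
          · exact absurd rfl hpq
          · exact Or.inl ⟨rfl, rfl⟩
        · rcases hq' with rfl | rfl
          · exact Or.inr ⟨rfl, rfl⟩
          · exact absurd rfl hpq
      · rintro (⟨rfl, rfl⟩ | ⟨rfl, rfl⟩)
        · rfl
        · exact Nat.xor_comm _ _
    have hterm : ∀ p ∈ range n, ∀ q ∈ range n,
        (if j ^^^ 2 ^ p = k ^^^ 2 ^ q then (1:ℝ) else 0)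
          = (if p = a then (1:ℝ) else 0) * (if q = b then 1 else 0)
            + (if p = b then (1:ℝ) else 0) * (if q = a then 1 else 0) := by
      intro p hp q hq
      have hiff := hcond p q (mem_range.mp hp) (mem_range.mp hq)
      by_cases hc : j ^^^ 2 ^ p = k ^^^ 2 ^ q
      · rw [if_pos hc]
        rcases hiff.mp hc with ⟨rfl, rfl⟩ | ⟨rfl, rfl⟩
        · simp [hab, Ne.symm hab]
        · simp [hab, Ne.symm hab]
      · rw [if_neg hc]
        have hno := fun h => hc (hiff.mpr h)
        rcases not_or.mp hno with ⟨hn1, hn2⟩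
        by_cases h1 : p = a <;> by_cases h2 : q = b <;> by_cases h3 : p = b <;>
          by_cases h4 : q = a <;> simp_all
    calc ∑ p ∈ range n, ∑ q ∈ range n, (if j ^^^ 2 ^ p = k ^^^ 2 ^ q then (1:ℝ) else 0)
        = ∑ p ∈ range n, ∑ q ∈ range n,
            ((if p = a then (1:ℝ) else 0) * (if q = b then 1 else 0)
              + (if p = b then (1:ℝ) else 0) * (if q = a then 1 else 0)) := by
          exact Finset.sum_congr rfl fun p hp => Finset.sum_congr rfl fun q hq =>
            hterm p hp q hq
      _ = 2 := by
          simp only [Finset.sum_add_distrib, ← Finset.sum_mul, ← Finset.mul_sum]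
          rw [Finset.sum_ite_eq' (range n) a (fun _ => (1:ℝ)),
            Finset.sum_ite_eq' (range n) b (fun _ => (1:ℝ))]
          simp [mem_range.mpr han, mem_range.mpr hbn]
          norm_num
  · rw [if_neg h2]
    apply Finset.sum_eq_zero
    intro p hp
    apply Finset.sum_eq_zero
    intro q hq
    rw [if_neg]
    intro heq
    rw [xor_shift] at heq
    have hpq : p ≠ q := by
      rintro rfl
      rw [Nat.xor_self] at heq
      exact hx0 heq
    apply h2
    rw [hamD_eq, heq, filter_two_two (mem_range.mp hp) (mem_range.mp hq) hpq,
      Finset.card_insert_of_notMem (by simp [hpq]), card_singleton]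

lemma minsum {n j k : ℕ} (hj : j < 2 ^ n) (hk : k < 2 ^ n) (h1 : hamD n j k = 1) :
    ((n : ℝ) - 2 * hamW n j) + ((n : ℝ) - 2 * hamW n k)
      = 2 * ((n : ℝ) - 1 - 2 * (min (hamW n j) (hamW n k) : ℕ)) := by
  obtain ⟨p, hpn, rfl⟩ := (hamD_one_iff hj hk).mp h1
  have hflip := hamW_flip (j := j) (n := n) hpn
  rw [Nat.cast_min]
  cases hb : j.testBit p
  · rw [hb] at hflip; norm_num at hflip
    have hle : (hamW n j : ℝ) ≤ (hamW n (j ^^^ 2 ^ p) : ℝ) := by rw [hflip]; linarith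
    rw [min_eq_left hle]
    linarith [hflip]
  · rw [hb] at hflip; norm_num at hflip
    have hle : (hamW n (j ^^^ 2 ^ p) : ℝ) ≤ (hamW n j : ℝ) := by rw [hflip]; linarith
    rw [min_eq_right hle]
    linarith [hflip]

lemma Mentry {n : ℕ} (hn : 2 ≤ n) {j k : ℕ} (hj : j < 2 ^ n) (hk : k < 2 ^ n) :
    Mr n j k = zA n * (if j = k then 1 else 0)
      - zB n * ∑ l ∈ range (2 ^ n), zD n j l * zD n l k := by
  have hn0 : (n : ℝ) ≠ 0 := Nat.cast_ne_zero.mpr (by omega)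
  by_cases hjk : j = k
  · subst hjk
    have hexp : ∀ l ∈ range (2 ^ n), zD n j l * zD n l j
        = (if hamD n j l = 1 then (1:ℝ) else 0)
          + (if l = j then ((n : ℝ) - 2 * hamW n j) ^ 2 else 0) := by
      intro l hl
      by_cases h : l = j
      · subst h
        have h01 : ¬ (0:ℕ) = 1 := by norm_num
        simp only [zD, hamD_self, h01, if_false, if_pos rfl, if_true]
        norm_num
        ring
      · have hjl : ¬ j = l := fun hh => h hh.symm
        simp only [zD, hamD_comm n l j, if_neg h, if_neg hjl]
        by_cases h1 : hamD n j l = 1 <;> simp [h1]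
    rw [Finset.sum_congr rfl hexp, Finset.sum_add_distrib, neighbor_count hj,
      Finset.sum_ite_eq' (range (2 ^ n)) j (fun _ => ((n : ℝ) - 2 * hamW n j) ^ 2),
      if_pos (mem_range.mpr hj), Mr, if_pos rfl, zA, zB]
    rw [if_pos rfl]
    field_simp
    ring
  · have hexp : ∀ l ∈ range (2 ^ n), zD n j l * zD n l k
        = (if hamD n j l = 1 then (1:ℝ) else 0) * (if hamD n l k = 1 then (1:ℝ) else 0)
          - (if l = k then ((n : ℝ) - 2 * hamW n k) * (if hamD n j k = 1 then (1:ℝ) else 0) else 0)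
          - (if l = j then ((n : ℝ) - 2 * hamW n j) * (if hamD n j k = 1 then (1:ℝ) else 0) else 0) := by
      intro l hl
      by_cases h1 : l = k
      · subst h1
        have hlj : ¬ l = j := fun hh => hjk hh.symm
        simp only [zD, hamD_self, if_pos rfl, if_neg hjk, if_neg hlj,
          if_neg (show ¬ (0:ℕ) = 1 by norm_num), if_true, eq_self_iff_true]
        ring
      · by_cases h2 : l = j
        · subst h2
          have hlk : ¬ l = k := h1
          simp only [zD, hamD_self, if_pos rfl, if_neg hlk,
            if_neg (show ¬ (0:ℕ) = 1 by norm_num), if_true, eq_self_iff_true]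
          ring
        · have hjl : ¬ j = l := fun hh => h2 hh.symm
          simp only [zD, if_neg h1, if_neg h2, if_neg hjl]
          ring
    rw [Finset.sum_congr rfl hexp]
    rw [Finset.sum_sub_distrib, Finset.sum_sub_distrib]
    have e1 : ∑ l ∈ range (2 ^ n),
        (if l = k then ((n : ℝ) - 2 * hamW n k) * (if hamD n j k = 1 then (1:ℝ) else 0) else 0)
          = ((n : ℝ) - 2 * hamW n k) * (if hamD n j k = 1 then (1:ℝ) else 0) := by
      rw [Finset.sum_ite_eq' (range (2 ^ n)) k _, if_pos (mem_range.mpr hk)]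
    have e2 : ∑ l ∈ range (2 ^ n),
        (if l = j then ((n : ℝ) - 2 * hamW n j) * (if hamD n j k = 1 then (1:ℝ) else 0) else 0)
          = ((n : ℝ) - 2 * hamW n j) * (if hamD n j k = 1 then (1:ℝ) else 0) := by
      rw [Finset.sum_ite_eq' (range (2 ^ n)) j _, if_pos (mem_range.mpr hj)]
    have e3 : ∑ l ∈ range (2 ^ n),
        (if hamD n j l = 1 then (1:ℝ) else 0) * (if hamD n l k = 1 then (1:ℝ) else 0)
          = if hamD n j k = 2 then 2 else 0 := by
      have hc : ∀ l ∈ range (2 ^ n),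
          (if hamD n j l = 1 then (1:ℝ) else 0) * (if hamD n l k = 1 then (1:ℝ) else 0)
            = ∑ p ∈ range n, ∑ q ∈ range n,
                (if l = j ^^^ 2 ^ p then (1:ℝ) else 0) * (if l = k ^^^ 2 ^ q then 1 else 0) := by
        intro l hl
        rw [Xsplit hj (mem_range.mp hl), hamD_comm, Xsplit hk (mem_range.mp hl),
          Finset.sum_mul_sum]
      rw [Finset.sum_congr rfl hc, Finset.sum_comm]
      have hd : ∀ p ∈ range n, ∑ l ∈ range (2 ^ n), ∑ q ∈ range n,
          (if l = j ^^^ 2 ^ p then (1:ℝ) else 0) * (if l = k ^^^ 2 ^ q then 1 else 0)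
            = ∑ q ∈ range n, (if j ^^^ 2 ^ p = k ^^^ 2 ^ q then (1:ℝ) else 0) := by
        intro p hp
        rw [Finset.sum_comm]
        apply Finset.sum_congr rfl
        intro q hq
        have : ∀ l ∈ range (2 ^ n),
            (if l = j ^^^ 2 ^ p then (1:ℝ) else 0) * (if l = k ^^^ 2 ^ q then 1 else 0)
              = if l = j ^^^ 2 ^ p then (if j ^^^ 2 ^ p = k ^^^ 2 ^ q then (1:ℝ) else 0) else 0 := by
          intro l _
          by_cases h : l = j ^^^ 2 ^ p
          · subst h; simp
          · simp [h]
        rw [Finset.sum_congr rfl this, Finset.sum_ite_eq' (range (2 ^ n)) (j ^^^ 2 ^ p) _,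
          if_pos (mem_range.mpr (xor_flip_lt (mem_range.mp hp) hj))]
      rw [Finset.sum_congr rfl hd]
      exact pairsum hj hk hjk
    rw [e1, e2, e3, Mr, if_neg hjk, zA, zB]
    by_cases hd1 : hamD n j k = 1
    · have hd2 : ¬ hamD n j k = 2 := by rw [hd1]; norm_num
      simp only [if_pos hd1, if_neg hd2, if_neg hjk]
      have hms := minsum hj hk hd1
      push_cast at hms ⊢
      linear_combination (-(1 - 1 / Real.sqrt 2) ^ 2 / (n:ℝ)) * hms
    · by_cases hd2 : hamD n j k = 2
      · simp only [if_neg hd1, if_pos hd2, if_neg hjk]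
        ring
      · simp only [if_neg hd1, if_neg hd2, if_neg hjk]
        ring




lemma parseval (n : ℕ) (v : ℕ → ℂ) :
    ∑ i ∈ range (2 ^ n), (starRingEnd ℂ) (∑ l ∈ range (2 ^ n), ((zU n l i : ℝ) : ℂ) * v l)
        * (∑ l ∈ range (2 ^ n), ((zU n l i : ℝ) : ℂ) * v l)
      = ∑ l ∈ range (2 ^ n), (starRingEnd ℂ) (v l) * v l := by
  have key : ∀ l ∈ range (2 ^ n), ∀ m ∈ range (2 ^ n),
      (∑ i ∈ range (2 ^ n), (((zU n l i * zU n m i : ℝ)) : ℂ)) = if l = m then 1 else 0 := by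
    intro l hl m hm
    have h : ∑ i ∈ range (2 ^ n), zU n l i * zU n m i = if l = m then 1 else 0 := by
      have hc : ∀ i ∈ range (2 ^ n), zU n l i * zU n m i = zU n i l * zU n i m := by
        intro i _; rw [zU_symm n l i, zU_symm n m i]
      rw [Finset.sum_congr rfl hc, zU_ortho (mem_range.mp hl) (mem_range.mp hm)]
    rw [← Complex.ofReal_sum, h]
    split <;> simp
  calc ∑ i ∈ range (2 ^ n), (starRingEnd ℂ) (∑ l ∈ range (2 ^ n), ((zU n l i : ℝ) : ℂ) * v l)
        * (∑ l ∈ range (2 ^ n), ((zU n l i : ℝ) : ℂ) * v l)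
      = ∑ i ∈ range (2 ^ n), ∑ l ∈ range (2 ^ n), ∑ m ∈ range (2 ^ n),
          ((starRingEnd ℂ) (v l) * v m) * (((zU n l i * zU n m i : ℝ)) : ℂ) := by
        apply Finset.sum_congr rfl; intro i _
        rw [map_sum, Finset.sum_mul_sum]
        apply Finset.sum_congr rfl; intro l _
        apply Finset.sum_congr rfl; intro m _
        rw [map_mul, Complex.conj_ofReal]
        push_cast
        ring
    _ = ∑ l ∈ range (2 ^ n), ∑ m ∈ range (2 ^ n),
          ((starRingEnd ℂ) (v l) * v m) * ∑ i ∈ range (2 ^ n),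
            (((zU n l i * zU n m i : ℝ)) : ℂ) := by
        rw [Finset.sum_comm]
        apply Finset.sum_congr rfl; intro l _
        rw [Finset.sum_comm]
        apply Finset.sum_congr rfl; intro m _
        rw [Finset.mul_sum]
    _ = ∑ l ∈ range (2 ^ n), (starRingEnd ℂ) (v l) * v l := by
        apply Finset.sum_congr rfl; intro l hl
        have hc : ∀ m ∈ range (2 ^ n),
            ((starRingEnd ℂ) (v l) * v m) * ∑ i ∈ range (2 ^ n),
              (((zU n l i * zU n m i : ℝ)) : ℂ)
            = if m = l then ((starRingEnd ℂ) (v l) * v m) else 0 := by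
          intro m hm
          rw [key l hl m hm]
          by_cases h : l = m
          · subst h; simp
          · rw [if_neg h, if_neg (fun hh => h hh.symm), mul_zero]
        rw [Finset.sum_congr rfl hc, Finset.sum_ite_eq' (range (2 ^ n)) l (fun m => (starRingEnd ℂ) (v l) * v m), if_pos hl]

lemma sqrt_half : (1:ℝ) / Real.sqrt 2 = Real.sqrt 2 / 2 := by
  have h : Real.sqrt 2 * Real.sqrt 2 = 2 := Real.mul_self_sqrt (by norm_num)
  field_simp
  exact s2_sq.symm

lemma zB_nonneg (n : ℕ) : 0 ≤ zB n := by rw [zB]; positivity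

lemma zB_mul {n : ℕ} (hn : 2 ≤ n) (c : ℝ) : zB n * (c * n) = (1 - 1 / Real.sqrt 2) ^ 2 * c := by
  rw [zB]
  have hn0 : (n : ℝ) ≠ 0 := Nat.cast_ne_zero.mpr (by omega)
  field_simp

lemma etaMin_eq {n : ℕ} (hn : 2 ≤ n) : etaMin n = zA n - zB n * (2 * (n:ℝ) ^ 2) := by
  have h1 : zB n * (2 * (n:ℝ) ^ 2) = (1 - 1 / Real.sqrt 2) ^ 2 * (2 * n) := by
    have := zB_mul hn (2 * (n:ℝ))
    rw [← this]; ring_nf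
  rw [etaMin, zA, h1, sqrt_half]
  linear_combination (-((n:ℝ) - 1) * (1 - Real.sqrt 2 / 2) / 2) * s2_sq

lemma etaMax_even {n : ℕ} (hn : 2 ≤ n) (h : Even n) : etaMax n = zA n := by
  rw [etaMax, if_pos h, zA, sqrt_half]
  linear_combination (-((n:ℝ) - 1) * (1 - Real.sqrt 2 / 2) / 2) * s2_sq

lemma etaMax_odd {n : ℕ} (hn : 2 ≤ n) (h : ¬ Even n) : etaMax n = zA n - zB n * 2 := by
  have hn0 : (n : ℝ) ≠ 0 := Nat.cast_ne_zero.mpr (by omega)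
  have h2 : zB n * 2 = (1 - 1 / Real.sqrt 2) ^ 2 * (2 / n) := by
    rw [zB]; field_simp
  rw [etaMax, if_neg h, zA, h2, sqrt_half]
  linear_combination (-((n:ℝ) - 1) * (1 - Real.sqrt 2 / 2) / 2) * s2_sq

lemma zD_symm (n j k : ℕ) : zD n j k = zD n k j := by
  by_cases h : j = k
  · subst h; rfl
  · rw [zD, zD, hamD_comm, if_neg h, if_neg (fun hh : k = j => h hh.symm)]

/-- For a unit vector `a ∈ ℂ^(2^n)`, the quadratic form
`c₂ = Σ_{j,k} conj(a_j) M_{jk} a_k` is real and lies in `[η_min(n), η_max(n)]`. -/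
theorem stmt7 (n : ℕ) (hn : 2 ≤ n) (a : Fin (2 ^ n) → ℂ)
    (ha : ∑ i : Fin (2 ^ n), ‖a i‖ ^ 2 = 1) :
    (∑ j : Fin (2 ^ n), ∑ k : Fin (2 ^ n),
        (starRingEnd ℂ) (a j) * ((Mmat n j k : ℝ) : ℂ) * a k).im = 0 ∧
    etaMin n ≤ (∑ j : Fin (2 ^ n), ∑ k : Fin (2 ^ n),
        (starRingEnd ℂ) (a j) * ((Mmat n j k : ℝ) : ℂ) * a k).re ∧
    (∑ j : Fin (2 ^ n), ∑ k : Fin (2 ^ n),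
        (starRingEnd ℂ) (a j) * ((Mmat n j k : ℝ) : ℂ) * a k).re ≤ etaMax n := by
  classical
  set A : ℕ → ℂ := fun j => if h : j < 2 ^ n then a ⟨j, h⟩ else 0 with hAdef
  have hAval : ∀ (j : Fin (2 ^ n)), A (j : ℕ) = a j := by
    intro j
    rw [hAdef]
    simp only [dif_pos j.isLt, Fin.eta]
  set DA : ℕ → ℂ := fun l => ∑ k ∈ range (2 ^ n), ((zD n l k : ℝ) : ℂ) * A k with hDAdef
  set BV : ℕ → ℂ := fun i => ∑ l ∈ range (2 ^ n), ((zU n l i : ℝ) : ℂ) * A l with hBVdef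
  set lam : ℕ → ℝ := fun i => Real.sqrt 2 * ((n : ℝ) - 2 * hamW n i) with hlamdef
  -- step 0 : Fin sums to range sums
  have hMmatMr : ∀ (j k : Fin (2 ^ n)), Mmat n j k = Mr n (j : ℕ) (k : ℕ) := by
    intro j k
    rw [Mmat, Mr]
    rcases eq_or_ne j k with rfl | h
    · rw [if_pos rfl, if_pos rfl]
    · rw [if_neg h, if_neg (fun hh => h (Fin.val_injective hh))]
  have hstep0 : (∑ j : Fin (2 ^ n), ∑ k : Fin (2 ^ n),
      (starRingEnd ℂ) (a j) * ((Mmat n j k : ℝ) : ℂ) * a k)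
      = ∑ j ∈ range (2 ^ n), ∑ k ∈ range (2 ^ n),
          (starRingEnd ℂ) (A j) * ((Mr n j k : ℝ) : ℂ) * A k := by
    rw [← Fin.sum_univ_eq_sum_range (fun j => ∑ k ∈ range (2 ^ n),
      (starRingEnd ℂ) (A j) * ((Mr n j k : ℝ) : ℂ) * A k) (2 ^ n)]
    apply Finset.sum_congr rfl
    intro j _
    rw [← Fin.sum_univ_eq_sum_range (fun k =>
      (starRingEnd ℂ) (A (j : ℕ)) * ((Mr n (j : ℕ) k : ℝ) : ℂ) * A k) (2 ^ n)]
    apply Finset.sum_congr rfl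
    intro k _
    rw [hAval j, hAval k, hMmatMr j k]
  -- T = 1
  have hT : ∑ l ∈ range (2 ^ n), (starRingEnd ℂ) (A l) * A l = 1 := by
    have h1 : ∀ l ∈ range (2 ^ n), (starRingEnd ℂ) (A l) * A l
        = ((‖A l‖ ^ 2 : ℝ) : ℂ) := by
      intro l _
      rw [mul_comm, Complex.mul_conj, Complex.sq_norm]
    rw [Finset.sum_congr rfl h1, ← Complex.ofReal_sum]
    have h2 : ∑ l ∈ range (2 ^ n), ‖A l‖ ^ 2 = 1 := by
      rw [← Fin.sum_univ_eq_sum_range (fun l => ‖A l‖ ^ 2) (2 ^ n)]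
      rw [← ha]
      apply Finset.sum_congr rfl
      intro i _
      rw [hAval i]
    rw [h2, Complex.ofReal_one]
  -- complex entry formula
  have hMC : ∀ j ∈ range (2 ^ n), ∀ k ∈ range (2 ^ n), ((Mr n j k : ℝ) : ℂ)
      = ((zA n : ℝ) : ℂ) * (if j = k then 1 else 0)
        - ((zB n : ℝ) : ℂ) * ∑ l ∈ range (2 ^ n), ((zD n j l : ℝ) : ℂ) * ((zD n l k : ℝ) : ℂ) := by
    intro j hj k hk
    rw [Mentry hn (mem_range.mp hj) (mem_range.mp hk)]
    push_cast [apply_ite (fun x : ℝ => (x : ℂ))]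
    ring
  -- conj of DA
  have hconjDA : ∀ l ∈ range (2 ^ n),
      (starRingEnd ℂ) (DA l) = ∑ j ∈ range (2 ^ n), (starRingEnd ℂ) (A j) * ((zD n j l : ℝ) : ℂ) := by
    intro l _
    simp only [hDAdef]
    rw [map_sum]
    apply Finset.sum_congr rfl
    intro k _
    rw [map_mul, Complex.conj_ofReal, zD_symm n l k]
    ring
  -- triple sum identity
  have hTriple : ∑ j ∈ range (2 ^ n), ∑ k ∈ range (2 ^ n), ∑ l ∈ range (2 ^ n),
      ((starRingEnd ℂ) (A j) * ((zD n j l : ℝ) : ℂ)) * (((zD n l k : ℝ) : ℂ) * A k)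
      = ∑ l ∈ range (2 ^ n), (starRingEnd ℂ) (DA l) * DA l := by
    have h1 : ∀ j ∈ range (2 ^ n), ∑ k ∈ range (2 ^ n), ∑ l ∈ range (2 ^ n),
        ((starRingEnd ℂ) (A j) * ((zD n j l : ℝ) : ℂ)) * (((zD n l k : ℝ) : ℂ) * A k)
        = ∑ l ∈ range (2 ^ n), ((starRingEnd ℂ) (A j) * ((zD n j l : ℝ) : ℂ)) * DA l := by
      intro j _
      rw [Finset.sum_comm]
      apply Finset.sum_congr rfl
      intro l _
      rw [← Finset.mul_sum]
    rw [Finset.sum_congr rfl h1, Finset.sum_comm]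
    apply Finset.sum_congr rfl
    intro l hl
    rw [← Finset.sum_mul, ← hconjDA l hl]
  -- expand the quadratic form
  have hexpand : ∑ j ∈ range (2 ^ n), ∑ k ∈ range (2 ^ n),
      (starRingEnd ℂ) (A j) * ((Mr n j k : ℝ) : ℂ) * A k
      = ((zA n : ℝ) : ℂ) * (∑ l ∈ range (2 ^ n), (starRingEnd ℂ) (A l) * A l)
        - ((zB n : ℝ) : ℂ) * ∑ l ∈ range (2 ^ n), (starRingEnd ℂ) (DA l) * DA l := by
    have h1 : ∀ j ∈ range (2 ^ n), ∀ k ∈ range (2 ^ n),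
        (starRingEnd ℂ) (A j) * ((Mr n j k : ℝ) : ℂ) * A k
        = ((zA n : ℝ) : ℂ) * (if j = k then (starRingEnd ℂ) (A j) * A k else 0)
          - ((zB n : ℝ) : ℂ) * ∑ l ∈ range (2 ^ n),
              ((starRingEnd ℂ) (A j) * ((zD n j l : ℝ) : ℂ)) * (((zD n l k : ℝ) : ℂ) * A k) := by
      intro j hj k hk
      rw [hMC j hj k hk]
      have e0 : (starRingEnd ℂ) (A j) * (((zA n : ℝ) : ℂ) * (if j = k then 1 else 0)
          - ((zB n : ℝ) : ℂ) * ∑ l ∈ range (2 ^ n), ((zD n j l : ℝ) : ℂ) * ((zD n l k : ℝ) : ℂ)) * A k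
        = ((zA n : ℝ) : ℂ) * ((if j = k then (1:ℂ) else 0) * ((starRingEnd ℂ) (A j) * A k))
          - ((zB n : ℝ) : ℂ) * ((starRingEnd ℂ) (A j)
              * (∑ l ∈ range (2 ^ n), ((zD n j l : ℝ) : ℂ) * ((zD n l k : ℝ) : ℂ)) * A k) := by
        ring
      rw [e0]
      congr 1
      · congr 1
        by_cases h : j = k
        · rw [if_pos h, if_pos h, one_mul]
        · rw [if_neg h, if_neg h, zero_mul]
      · congr 1
        rw [Finset.mul_sum, Finset.sum_mul]
        apply Finset.sum_congr rfl
        intro l _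
        ring
    rw [Finset.sum_congr rfl (fun j hj => Finset.sum_congr rfl (fun k hk => h1 j hj k hk))]
    rw [Finset.sum_congr rfl (fun j _ => Finset.sum_sub_distrib _ _), Finset.sum_sub_distrib]
    congr 1
    · rw [Finset.mul_sum]
      apply Finset.sum_congr rfl
      intro j hj
      rw [← Finset.mul_sum]
      congr 1
      rw [Finset.sum_ite_eq (range (2 ^ n)) j (fun k => (starRingEnd ℂ) (A j) * A k), if_pos hj]
    · rw [← hTriple, Finset.mul_sum]
      apply Finset.sum_congr rfl
      intro j _
      rw [Finset.mul_sum]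
  -- eigen action on DA
  have hCV : ∀ i ∈ range (2 ^ n), (∑ l ∈ range (2 ^ n), ((zU n l i : ℝ) : ℂ) * DA l)
      = ((Real.sqrt 2 * ((n : ℝ) - 2 * hamW n i) : ℝ) : ℂ) * BV i := by
    intro i _
    have h1 : ∀ l ∈ range (2 ^ n), ((zU n l i : ℝ) : ℂ) * DA l
        = ∑ k ∈ range (2 ^ n), ((zU n l i : ℝ) : ℂ) * (((zD n l k : ℝ) : ℂ) * A k) := by
      intro l _
      simp only [hDAdef]
      rw [Finset.mul_sum]
    rw [Finset.sum_congr rfl h1, Finset.sum_comm]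
    have h2 : ∀ k ∈ range (2 ^ n),
        ∑ l ∈ range (2 ^ n), ((zU n l i : ℝ) : ℂ) * (((zD n l k : ℝ) : ℂ) * A k)
        = ((Real.sqrt 2 * ((n : ℝ) - 2 * hamW n i) : ℝ) : ℂ) * (((zU n k i : ℝ) : ℂ) * A k) := by
      intro k hk
      have h3 : ∀ l ∈ range (2 ^ n), ((zU n l i : ℝ) : ℂ) * (((zD n l k : ℝ) : ℂ) * A k)
          = ((zD n k l * zU n l i : ℝ) : ℂ) * A k := by
        intro l _
        rw [zD_symm n k l]
        push_cast
        ring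
      rw [Finset.sum_congr rfl h3, ← Finset.sum_mul, ← Complex.ofReal_sum,
        eig (mem_range.mp hk) i]
      push_cast
      ring
    rw [Finset.sum_congr rfl h2, ← Finset.mul_sum]
  -- |DA|^2 sum via parseval
  have hDAsum : ∑ l ∈ range (2 ^ n), (starRingEnd ℂ) (DA l) * DA l
      = ∑ i ∈ range (2 ^ n), (((Real.sqrt 2 * ((n : ℝ) - 2 * hamW n i)) ^ 2 : ℝ) : ℂ)
          * ((starRingEnd ℂ) (BV i) * BV i) := by
    rw [← parseval n DA]
    apply Finset.sum_congr rfl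
    intro i hi
    rw [hCV i hi, map_mul, Complex.conj_ofReal]
    push_cast
    ring
  have hBVreal : ∀ i, (starRingEnd ℂ) (BV i) * BV i = ((Complex.normSq (BV i) : ℝ) : ℂ) := by
    intro i
    rw [mul_comm, Complex.mul_conj]
  have hBV1 : ∑ i ∈ range (2 ^ n), Complex.normSq (BV i) = 1 := by
    have hc : ((∑ i ∈ range (2 ^ n), Complex.normSq (BV i) : ℝ) : ℂ) = 1 := by
      rw [Complex.ofReal_sum]
      have h1 : ∀ i ∈ range (2 ^ n), ((Complex.normSq (BV i) : ℝ) : ℂ)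
          = (starRingEnd ℂ) (BV i) * BV i := fun i _ => (hBVreal i).symm
      rw [Finset.sum_congr rfl h1]
      simp only [hBVdef]
      rw [parseval n A, hT]
    exact_mod_cast hc
  set Q : ℝ := ∑ i ∈ range (2 ^ n), (Real.sqrt 2 * ((n : ℝ) - 2 * hamW n i)) ^ 2
      * Complex.normSq (BV i) with hQdef
  have hQsum : ∑ i ∈ range (2 ^ n), (((Real.sqrt 2 * ((n : ℝ) - 2 * hamW n i)) ^ 2 : ℝ) : ℂ)
      * ((starRingEnd ℂ) (BV i) * BV i) = ((Q : ℝ) : ℂ) := by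
    rw [hQdef, Complex.ofReal_sum]
    apply Finset.sum_congr rfl
    intro i _
    rw [hBVreal i]
    push_cast
    ring
  -- the value of the quadratic form
  have hS : (∑ j : Fin (2 ^ n), ∑ k : Fin (2 ^ n),
      (starRingEnd ℂ) (a j) * ((Mmat n j k : ℝ) : ℂ) * a k) = ((zA n - zB n * Q : ℝ) : ℂ) := by
    rw [hstep0, hexpand, hT, hDAsum, hQsum]
    push_cast
    ring
  rw [hS]
  have hQ0 : 0 ≤ Q := by
    rw [hQdef]
    exact Finset.sum_nonneg fun i _ => mul_nonneg (sq_nonneg _) (Complex.normSq_nonneg _)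
  refine ⟨Complex.ofReal_im _, ?_, ?_⟩
  · rw [Complex.ofReal_re, etaMin_eq hn]
    have hQub : Q ≤ 2 * (n : ℝ) ^ 2 := by
      have hstep : ∀ i ∈ range (2 ^ n),
          (Real.sqrt 2 * ((n : ℝ) - 2 * hamW n i)) ^ 2 * Complex.normSq (BV i)
            ≤ (2 * (n : ℝ) ^ 2) * Complex.normSq (BV i) := by
        intro i _
        apply mul_le_mul_of_nonneg_right _ (Complex.normSq_nonneg _)
        have h1 : (Real.sqrt 2 * ((n : ℝ) - 2 * hamW n i)) ^ 2
            = 2 * ((n : ℝ) - 2 * hamW n i) ^ 2 := by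
          rw [mul_pow, s2_sq]
        rw [h1]
        have hW0 : (0 : ℝ) ≤ (hamW n i : ℝ) := Nat.cast_nonneg _
        have hWn : (hamW n i : ℝ) ≤ (n : ℝ) := Nat.cast_le.mpr (hamW_le n i)
        nlinarith
      calc Q = ∑ i ∈ range (2 ^ n), (Real.sqrt 2 * ((n : ℝ) - 2 * hamW n i)) ^ 2
          * Complex.normSq (BV i) := hQdef
        _ ≤ ∑ i ∈ range (2 ^ n), (2 * (n : ℝ) ^ 2) * Complex.normSq (BV i) :=
            Finset.sum_le_sum hstep
        _ = 2 * (n : ℝ) ^ 2 := by rw [← Finset.mul_sum, hBV1, mul_one]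
    nlinarith [mul_le_mul_of_nonneg_left hQub (zB_nonneg n)]
  · rw [Complex.ofReal_re]
    by_cases hpar : Even n
    · rw [etaMax_even hn hpar]
      nlinarith [zB_nonneg n, hQ0, mul_nonneg (zB_nonneg n) hQ0]
    · rw [etaMax_odd hn hpar]
      have hodd : Odd n := Nat.odd_iff.mpr (Nat.not_even_iff.mp hpar)
      have hQ2 : 2 ≤ Q := by
        have hstep : ∀ i ∈ range (2 ^ n), (2 : ℝ) * Complex.normSq (BV i)
            ≤ (Real.sqrt 2 * ((n : ℝ) - 2 * hamW n i)) ^ 2 * Complex.normSq (BV i) := by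
          intro i _
          apply mul_le_mul_of_nonneg_right _ (Complex.normSq_nonneg _)
          have h1 : (Real.sqrt 2 * ((n : ℝ) - 2 * hamW n i)) ^ 2
              = 2 * ((n : ℝ) - 2 * hamW n i) ^ 2 := by
            rw [mul_pow, s2_sq]
          rw [h1]
          set z : ℤ := (n : ℤ) - 2 * (hamW n i : ℤ) with hz
          have hzodd : Odd z := by
            rcases hodd with ⟨m, hm⟩
            exact ⟨(m : ℤ) - (hamW n i : ℤ), by rw [hz]; push_cast [hm]; ring⟩
          have hz0 : z ≠ 0 := by
            rintro h0
            rw [h0] at hzodd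
            simp [Int.odd_iff] at hzodd
          have hz1 : z ≤ -1 ∨ 1 ≤ z := by omega
          have hz2 : (1 : ℤ) ≤ z ^ 2 := by rcases hz1 with h | h <;> nlinarith
          have hr : ((n : ℝ) - 2 * hamW n i) = (z : ℝ) := by rw [hz]; push_cast; ring
          rw [hr]
          have hz3 : (1 : ℝ) ≤ (z : ℝ) ^ 2 := by exact_mod_cast hz2
          linarith
        have h4 : ∑ i ∈ range (2 ^ n), (2 : ℝ) * Complex.normSq (BV i) ≤ Q := by
          rw [hQdef]
          exact Finset.sum_le_sum hstep
        rw [← Finset.mul_sum, hBV1, mul_one] at h4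
        exact h4
      nlinarith [zB_nonneg n, hQ2, mul_le_mul_of_nonneg_left hQ2 (zB_nonneg n)]
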